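/- arXiv:0901.3170 — 8 statements merged into one kernel-verified Lean document; each statement's English description precedes it below -/
import Mathlib

section
/- Knuth's set {x_1, ..., x_n}, where x_i consists of i ones followed by n-i zeros, is a balancing set: for every y in F_2^n there exists i such that the Hamming weight of y + x_i equals n/2. -/
private lemma ivt_aux (g : ℕ → ℕ) (m : ℕ) :
    ∀ n : ℕ, (∀ i < n, g (i + 1) ≤ g i + 1) → g 0 ≤ m → m ≤ g n →
      ∃ i ≤ n, g i = m := by
  intro n
  induction n with
  | zero => intro _ h1 h2; exact ⟨0, le_refl 0, le_antisymm h1 h2⟩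
  | succ n ih =>
    intro hstep h0 hn
    by_cases hc : m ≤ g n
    · obtain ⟨i, hi, hgi⟩ := ih (fun i hi => hstep i (by omega)) h0 hc
      exact ⟨i, by omega, hgi⟩
    · have := hstep n (by omega)
      exact ⟨n + 1, le_refl _, by omega⟩

private lemma flip_step {n : ℕ} (u v : Fin n → ZMod 2) (k : Fin n)
    (hne : ∀ j, j ≠ k → u j = v j) (hk : v k = u k + 1) :
    hammingNorm v = hammingNorm u + 1 ∨ hammingNorm u = hammingNorm v + 1 := by
  classical
  unfold hammingNorm
  set A := ({i | u i ≠ 0} : Finset (Fin n)) with hA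
  set B := ({i | v i ≠ 0} : Finset (Fin n)) with hB
  have herase : A.erase k = B.erase k := by
    ext j
    simp only [Finset.mem_erase, hA, hB, Finset.mem_filter, Finset.mem_univ, true_and]
    constructor
    · rintro ⟨hjk, hj⟩; exact ⟨hjk, by rwa [← hne j hjk]⟩
    · rintro ⟨hjk, hj⟩; exact ⟨hjk, by rwa [hne j hjk]⟩
  have hcases : ∀ a : ZMod 2, a = 0 ∨ a = 1 := by decide
  rcases hcases (u k) with h0 | h1
  · left
    have hkA : k ∉ A := by simp [hA, h0]
    have hkB : k ∈ B := by simp [hB, hk, h0]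
    have : A.erase k = A := Finset.erase_eq_of_notMem hkA
    rw [← Finset.card_erase_add_one hkB, ← herase, this]
  · right
    have hkA : k ∈ A := by simp [hA, h1]
    have hvk : v k = 0 := by rw [hk, h1]; decide
    have hkB : k ∉ B := by simp [hB, hvk]
    have : B.erase k = B := Finset.erase_eq_of_notMem hkB
    rw [← Finset.card_erase_add_one hkA, herase, this]

theorem stmt1 (n : ℕ) (hn : 0 < n) (he : Even n) (y : Fin n → ZMod 2) :
    ∃ i, 1 ≤ i ∧ i ≤ n ∧
      hammingNorm (y + fun j : Fin n => if (j : ℕ) < i then (1 : ZMod 2) else 0) = n / 2 := by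
  classical
  set g : ℕ → ℕ := fun i =>
    hammingNorm (y + fun j : Fin n => if (j : ℕ) < i then (1 : ZMod 2) else 0) with hg
  set w := hammingNorm y with hw
  have hwn : w ≤ n := by
    rw [hw]
    calc hammingNorm y ≤ Fintype.card (Fin n) := Finset.card_le_univ _
    _ = n := Fintype.card_fin n
  have g0 : g 0 = w := by
    simp only [hg, hw]
    congr 1
    funext j
    simp
  have gn : g n = n - w := by
    have heq : (y + fun j : Fin n => if (j : ℕ) < n then (1 : ZMod 2) else 0) =
        fun j => y j + 1 := by
      funext j; simp [j.isLt]
    rw [hg]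
    simp only [heq]
    have key : (Finset.univ.filter fun i : Fin n => (fun j => y j + 1) i ≠ 0)
        = Finset.univ.filter fun i : Fin n => ¬ (y i ≠ 0) := by
      ext j
      simp only [Finset.mem_filter, Finset.mem_univ, true_and, not_not]
      have h2 : ∀ a : ZMod 2, (a + 1 ≠ 0 ↔ a = 0) := by decide
      exact h2 (y j)
    show (Finset.univ.filter fun i : Fin n => (fun j => y j + 1) i ≠ 0).card = n - w
    rw [key, hw]
    have h3 := Finset.card_filter_add_card_filter_not
      (s := (Finset.univ : Finset (Fin n))) (p := fun i : Fin n => y i ≠ 0)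
    simp only [Finset.card_univ, Fintype.card_fin] at h3
    show _ = n - (Finset.univ.filter fun i : Fin n => y i ≠ 0).card
    omega
  have step : ∀ i < n, g (i + 1) = g i + 1 ∨ g i = g (i + 1) + 1 := by
    intro i hi
    simp only [hg]
    apply flip_step (k := ⟨i, hi⟩)
    · intro j hjk
      have hji : (j : ℕ) ≠ i := fun h => hjk (Fin.ext h)
      by_cases h : (j : ℕ) < i
      · simp [h, Nat.lt_succ_of_lt h]; omega
      · have h' : ¬ (j : ℕ) < i + 1 := by omega
        simp [h, h']; omega
    · simp [Nat.lt_irrefl]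
  obtain ⟨m, rfl⟩ := he
  by_cases hcase : w ≤ m
  · have hstep' : ∀ i < m + m, g (i + 1) ≤ g i + 1 := by
      intro i hi; rcases step i hi with h | h <;> omega
    have h2 : (m + m) / 2 ≤ g (m + m) := by omega
    have h1 : g 0 ≤ (m + m) / 2 := by omega
    obtain ⟨i, hile, hgi⟩ := ivt_aux g ((m + m) / 2) (m + m) hstep' h1 h2
    by_cases hi0 : i = 0
    · subst hi0
      refine ⟨m + m, by omega, le_refl _, ?_⟩
      show g (m + m) = (m + m) / 2
      omega
    · exact ⟨i, by omega, hile, hgi⟩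
  · have hstep' : ∀ i < m + m, g (m + m - (i + 1)) ≤ g (m + m - i) + 1 := by
      intro i hi
      have hlt : m + m - i - 1 < m + m := by omega
      have hs := step (m + m - i - 1) hlt
      have e1 : m + m - (i + 1) = m + m - i - 1 := by omega
      have e2 : m + m - i = (m + m - i - 1) + 1 := by omega
      rw [← e2] at hs
      rw [e1]
      omega
    have h1 : g (m + m - 0) ≤ (m + m) / 2 := by
      have e : m + m - 0 = m + m := rfl
      rw [e]; omega
    have h2 : (m + m) / 2 ≤ g (m + m - (m + m)) := by
      have e : m + m - (m + m) = 0 := by omega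
      rw [e]; omega
    obtain ⟨i, hile, hgi⟩ := ivt_aux (fun i => g (m + m - i)) ((m + m) / 2)
      (m + m) hstep' h1 h2
    refine ⟨m + m - i, ?_, by omega, hgi⟩
    by_cases hi : i = m + m
    · exfalso
      rw [hi, Nat.sub_self] at hgi
      omega
    · omega
end

section
/- For every subset C of F_2^n, the average of Q(C + F x) over all x in F_2^n equals Q(C)^2; that is, 2^{-n} * sum_{x in F^n} Q(C ∪ (C+x)) = Q(C)^2. -/
/-- The set of words at Hamming distance exactly `n/2` from some element of `C`. -/
def ballHalf (n : ℕ) (C : Set (Fin n → ZMod 2)) : Set (Fin n → ZMod 2) :=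
  {y | ∃ c ∈ C, hammingDist y c = n / 2}

/-- `Q(C) = 1 - |B(C)|/2^n`, the fraction of words not balanced by `C`. -/
noncomputable def Qfrac (n : ℕ) (C : Set (Fin n → ZMod 2)) : ℝ :=
  1 - (Nat.card (ballHalf n C) : ℝ) / 2 ^ n

lemma hd_add {n : ℕ} (a b t : Fin n → ZMod 2) :
    hammingDist (a + t) (b + t) = hammingDist a b := by
  unfold hammingDist
  congr 1
  apply Finset.filter_congr
  intro i _
  simp

lemma ballHalf_union {n : ℕ} (C : Set (Fin n → ZMod 2)) (x : Fin n → ZMod 2) :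
    ballHalf n (C ∪ (fun s => s + x) '' C)
      = ballHalf n C ∪ (fun s => s + x) '' ballHalf n C := by
  ext y
  simp only [ballHalf, Set.mem_union, Set.mem_image, Set.mem_setOf_eq]
  constructor
  · rintro ⟨c, hc | ⟨b, hb, rfl⟩, hd⟩
    · exact Or.inl ⟨c, hc, hd⟩
    · refine Or.inr ⟨y - x, ⟨b, hb, ?_⟩, by ring⟩
      rw [← hd_add (y - x) b x]
      simpa using hd
  · rintro (⟨c, hc, hd⟩ | ⟨z, ⟨c, hc, hd⟩, rfl⟩)
    · exact ⟨c, Or.inl hc, hd⟩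
    · exact ⟨c + x, Or.inr ⟨c, hc, rfl⟩, by rw [hd_add]; exact hd⟩

theorem stmt3 (n : ℕ) (hn : 0 < n) (he : Even n) (C : Set (Fin n → ZMod 2)) :
    (2 : ℝ) ^ (-(n : ℤ)) *
        ∑ x : Fin n → ZMod 2, Qfrac n (C ∪ (fun s => s + x) '' C)
      = (Qfrac n C) ^ 2 := by
  classical
  set B : Finset (Fin n → ZMod 2) := (ballHalf n C).toFinset with hB
  have hcard : ∀ (S : Set (Fin n → ZMod 2)), (Nat.card S : ℝ) = (S.toFinset.card : ℝ) := by
    intro S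
    rw [Nat.card_coe_set_eq, Set.ncard_eq_toFinset_card']
  -- intersection count
  have hmem : ∀ (x y : Fin n → ZMod 2), y ∈ B.image (fun s => s + x) ↔ y - x ∈ B := by
    intro x y
    simp only [Finset.mem_image]
    constructor
    · rintro ⟨b, hb, rfl⟩; simpa using hb
    · intro h; exact ⟨y - x, h, by ring⟩
  have count : ∑ x : Fin n → ZMod 2, ((B ∩ B.image (fun s => s + x)).card : ℝ)
      = (B.card : ℝ) * B.card := by
    have h1 : ∀ x : Fin n → ZMod 2, (B ∩ B.image (fun s => s + x)) =
        B.filter (fun y => y - x ∈ B) := by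
      intro x
      ext y
      simp only [Finset.mem_inter, Finset.mem_filter, hmem]
    simp_rw [h1, Finset.card_filter]
    push_cast
    rw [Finset.sum_comm]
    rw [Finset.sum_congr rfl (fun y _ => ?_)]
    · rw [Finset.sum_const, nsmul_eq_mul]
    · have h2 := Equiv.sum_comp (Equiv.subLeft y) (fun z => if z ∈ B then (1:ℝ) else 0)
      simp only [Equiv.subLeft_apply] at h2
      rw [h2]
      simp
  -- union cardinality
  have hunion : ∀ x : Fin n → ZMod 2, ((B ∪ B.image (fun s => s + x)).card : ℝ)
      = 2 * B.card - ((B ∩ B.image (fun s => s + x)).card : ℝ) := by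
    intro x
    have h := Finset.card_union_add_card_inter B (B.image (fun s => s + x))
    have himg : (B.image (fun s => s + x)).card = B.card :=
      Finset.card_image_of_injective _ (fun a b h => by simpa using congrArg (fun s => s - x) h)
    rw [himg] at h
    have := congrArg (fun m : ℕ => (m : ℝ)) h
    push_cast at this
    linarith
  have hQ : ∀ x : Fin n → ZMod 2, Qfrac n (C ∪ (fun s => s + x) '' C)
      = 1 - ((B ∪ B.image (fun s => s + x)).card : ℝ) / 2 ^ n := by
    intro x
    rw [Qfrac, hcard, ballHalf_union]
    congr 3
    rw [Set.toFinset_union, Set.toFinset_image]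
  have hQC : Qfrac n C = 1 - (B.card : ℝ) / 2 ^ n := by
    rw [Qfrac, hcard]
  have hVcard : (Fintype.card (Fin n → ZMod 2) : ℝ) = 2 ^ n := by
    simp
  have hsum : ∑ x : Fin n → ZMod 2, Qfrac n (C ∪ (fun s => s + x) '' C)
      = 2 ^ n - (2 ^ n * (2 * B.card) - (B.card : ℝ) * B.card) / 2 ^ n := by
    rw [Finset.sum_congr rfl (fun x _ => hQ x)]
    rw [Finset.sum_sub_distrib, Finset.sum_const, ← Finset.sum_div]
    rw [Finset.sum_congr rfl (fun x _ => hunion x), Finset.sum_sub_distrib,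
      Finset.sum_const, count]
    simp only [Finset.card_univ, nsmul_eq_mul, hVcard, smul_eq_mul, mul_one]
  rw [hsum, hQC]
  have h2 : (2 : ℝ) ^ (-(n : ℤ)) = ((2 : ℝ) ^ n)⁻¹ := by
    rw [zpow_neg, zpow_natCast]
  rw [h2]
  have hp : (2 : ℝ) ^ n ≠ 0 := by positivity
  field_simp
  ring
end

section
/- If Q({0}) <= 1 - 1/sqrt(2n) and l >= (3/2) log_2 n, then (1 - 1/sqrt(2n))^{2^l} < 2^{-n}; consequently, any subset C of F_2^n with Q(C) <= Q({0})^{2^l} satisfies Q(C) = 0, i.e., C is a balancing set. -/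
theorem stmt6 (n : ℕ) (hn : 0 < n) (he : Even n) (l : ℕ)
    (hQ0 : Qfrac n {0} ≤ 1 - 1 / Real.sqrt (2 * n))
    (hl : (3 / 2 : ℝ) * Real.logb 2 n ≤ l) :
    (1 - 1 / Real.sqrt (2 * n)) ^ (2 ^ l) < (2 : ℝ) ^ (-(n : ℤ)) ∧
    ∀ C : Set (Fin n → ZMod 2), Qfrac n C ≤ (Qfrac n {0}) ^ (2 ^ l) →
      Qfrac n C = 0 ∧ ballHalf n C = Set.univ := by
  have hn2 : 2 ≤ n := Nat.le_of_dvd hn he.two_dvd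
  have hnR : (2:ℝ) ≤ n := by exact_mod_cast hn2
  have hnpos : (0:ℝ) < n := by linarith
  set s := Real.sqrt (2 * n) with hs
  have hs2 : 2 ≤ s := by
    nlinarith [Real.sq_sqrt (show (0:ℝ) ≤ 2*n by positivity),
      Real.sqrt_nonneg (2*(n:ℝ))]
  have hspos : 0 < s := by linarith
  have ha0 : 0 ≤ 1 - 1 / s := by
    have h1 : 1 / s ≤ 1 / 2 := by
      apply one_div_le_one_div_of_le <;> linarith
    linarith
  have hsq2 : Real.sqrt 2 < 1.4422 := by
    nlinarith [Real.sq_sqrt (show (0:ℝ) ≤ 2 by norm_num), Real.sqrt_nonneg (2:ℝ)]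
  have hpow : (n:ℝ) * Real.sqrt n ≤ 2 ^ l := by
    have h1 : (2:ℝ) ^ ((3/2 : ℝ) * Real.logb 2 n) ≤ (2:ℝ) ^ ((l:ℕ):ℝ) :=
      (Real.rpow_le_rpow_left_iff (by norm_num)).mpr hl
    have h2 : (2:ℝ) ^ ((3/2:ℝ) * Real.logb 2 n) = (n:ℝ) * Real.sqrt n := by
      rw [mul_comm, Real.rpow_mul (by norm_num : (0:ℝ) ≤ 2),
        Real.rpow_logb (by norm_num) (by norm_num) hnpos,
        show (3/2:ℝ) = 1 + 1/2 by norm_num, Real.rpow_add hnpos, Real.rpow_one,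
        Real.sqrt_eq_rpow]
    rw [← Real.rpow_natCast 2 l]
    linarith [h2 ▸ h1]
  have hL : Real.log 2 < 0.6931471808 := Real.log_two_lt_d9
  have hLpos : 0 < Real.log 2 := Real.log_pos (by norm_num)
  have hsplit : s = Real.sqrt 2 * Real.sqrt n := by
    rw [hs, Real.sqrt_mul (by norm_num)]
  have hsqn : Real.sqrt 2 ≤ Real.sqrt n := Real.sqrt_le_sqrt hnR
  have hsqnpos : 0 < Real.sqrt n := Real.sqrt_pos.mpr hnpos
  have hkey : (n:ℝ) * Real.log 2 * s < 2 ^ l := by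
    have h1 : Real.log 2 * Real.sqrt 2 < 1 := by nlinarith [Real.sqrt_nonneg 2]
    have h2 : (n:ℝ) * Real.log 2 * s < n * Real.sqrt n := by
      rw [hsplit]; nlinarith [mul_pos hnpos hsqnpos]
    linarith
  have hmain : (1 - 1/s)^(2^l) < (2:ℝ)^(-(n:ℤ)) := by
    have e1 : (1 - 1/s) ≤ Real.exp (-(1/s)) := by
      nlinarith [Real.add_one_le_exp (-(1/s))]
    have e2 : (1-1/s)^(2^l) ≤ Real.exp (-(1/s)) ^ (2^l) := pow_le_pow_left₀ ha0 e1 _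
    have e3 : Real.exp (-(1/s)) ^ (2^l) = Real.exp (((2^l : ℕ):ℝ) * (-(1/s))) :=
      (Real.exp_nat_mul _ _).symm
    have e5 : (2:ℝ)^(-(n:ℤ)) = Real.exp (-((n:ℝ) * Real.log 2)) := by
      rw [Real.exp_neg, zpow_neg, zpow_natCast]
      congr 1
      rw [show (n:ℝ) * Real.log 2 = (n:ℕ) * Real.log 2 by norm_num,
        Real.exp_nat_mul, Real.exp_log (by norm_num : (0:ℝ) < 2)]
    have e4 : ((2^l : ℕ):ℝ) * (-(1/s)) < -((n:ℝ) * Real.log 2) := by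
      have h6 : (n:ℝ) * Real.log 2 < ((2^l : ℕ):ℝ) * (1/s) := by
        rw [mul_one_div, lt_div_iff₀ hspos]
        push_cast
        exact hkey
      have h7 : ((2^l : ℕ):ℝ) * (-(1/s)) = -(((2^l : ℕ):ℝ) * (1/s)) := by ring
      linarith
    calc (1 - 1/s)^(2^l) ≤ Real.exp (((2^l:ℕ):ℝ) * (-(1/s))) := e3 ▸ e2
      _ < Real.exp (-((n:ℝ) * Real.log 2)) := Real.exp_lt_exp.mpr e4
      _ = (2:ℝ)^(-(n:ℤ)) := e5.symm
  refine ⟨hmain, ?_⟩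
  have h2n : (0:ℝ) < 2^n := by positivity
  have hcardtype : Nat.card (Fin n → ZMod 2) = 2^n := by
    simp [Nat.card_eq_fintype_card]
  have cardle : ∀ D : Set (Fin n → ZMod 2), Nat.card D ≤ 2^n := fun D =>
    hcardtype ▸ Nat.card_le_card_of_injective _ Subtype.val_injective
  have hQ0nonneg : 0 ≤ Qfrac n {0} := by
    unfold Qfrac
    rw [sub_nonneg, div_le_one h2n]
    exact_mod_cast cardle _
  intro C hC
  have hC' : Qfrac n C < (2:ℝ)^(-(n:ℤ)) :=
    calc Qfrac n C ≤ (Qfrac n {0})^(2^l) := hC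
      _ ≤ (1 - 1/s)^(2^l) := pow_le_pow_left₀ hQ0nonneg hQ0 _
      _ < _ := hmain
  have hBle : Nat.card (ballHalf n C) ≤ 2^n := cardle _
  have hcard : (2^n : ℕ) ≤ Nat.card (ballHalf n C) := by
    unfold Qfrac at hC'
    rw [zpow_neg, zpow_natCast] at hC'
    set c : ℝ := (Nat.card (ballHalf n C) : ℝ) with hc
    have e1 : (2^n:ℝ)⁻¹ * 2^n = 1 := inv_mul_cancel₀ (ne_of_gt h2n)
    have e2 : c/2^n * 2^n = c := div_mul_cancel₀ c (ne_of_gt h2n)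
    have hlt : (2^n:ℝ) < c + 1 := by nlinarith
    have : (2^n:ℕ) < Nat.card (ballHalf n C) + 1 := by
      rw [hc] at hlt; exact_mod_cast hlt
    omega
  have hBeq : Nat.card (ballHalf n C) = 2^n := le_antisymm hBle hcard
  have huniv : ballHalf n C = Set.univ := by
    apply Set.eq_of_subset_of_ncard_le (Set.subset_univ _)
    rw [Set.ncard_univ, hcardtype, ← Nat.card_coe_set_eq, hBeq]
  refine ⟨?_, huniv⟩
  unfold Qfrac
  rw [hBeq]
  push_cast
  field_simp
  ring
end

section
/- Let x, x' in F_2^n with d(x,x') = τn even and (1/2 - δ)n <= τn <= (1/2 + δ)n for some δ in [0, 1/2). Then |B(x) ∩ B(x')| <= 2^{n+2} / (π n sqrt(1 - 4δ^2)). -/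
open Real Nat

lemma centralBinom_le_real (m : ℕ) (hm : 0 < m) :
    (Nat.centralBinom m : ℝ) ≤ 4 ^ m / Real.sqrt (π * m) := by
  have hπ := Real.pi_pos
  have hm' : (0:ℝ) < m := by exact_mod_cast hm
  set c : ℝ := (Nat.centralBinom m : ℝ) with hc
  have hcpos : (0:ℝ) < c := by
    rw [hc]; exact_mod_cast Nat.centralBinom_pos m
  have hf : (0:ℝ) < (m ! : ℝ) := by exact_mod_cast Nat.factorial_pos m
  have hg : ((2*m)! : ℝ) = c * (m ! : ℝ)^2 := by
    have h2 : Nat.centralBinom m * m ! * (m !) = (2*m)! := by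
      have h3 : 2 * m - m = m := by omega
      rw [Nat.centralBinom]
      calc (2*m).choose m * m ! * m ! = (2*m).choose m * m ! * (2*m - m)! := by rw [h3]
        _ = (2*m)! := Nat.choose_mul_factorial_mul_factorial (by omega)
    push_cast [← h2]
    ring
  have h1 : ((2*(m:ℝ)+1))/(2*m+2) * (π/2) ≤ 2^(4*m) * (m ! :ℝ)^4 / (((2*m)! :ℝ)^2 * (2*m+1)) := by
    have := Real.Wallis.le_W m
    rwa [Real.Wallis.W_eq_factorial_ratio] at this
  have key : c^2 * (π * m) ≤ (4:ℝ)^m * 4^m := by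
    rw [hg] at h1
    have h16 : (2:ℝ)^(4*m) = 4^m * 4^m := by
      rw [pow_mul, ← mul_pow]; norm_num
    rw [h16] at h1
    have hne : c ≠ 0 := ne_of_gt hcpos
    have hfe : (m ! : ℝ) ≠ 0 := ne_of_gt hf
    have hB : (4:ℝ)^m*4^m*((m ! :ℝ))^4 / ((c*((m ! :ℝ))^2)^2*(2*(m:ℝ)+1))
        = 4^m*4^m/(c^2*(2*(m:ℝ)+1)) := by
      field_simp
    rw [hB, le_div_iff₀ (by positivity)] at h1
    have h1' : (2*(m:ℝ)+1)*π*(c^2*(2*(m:ℝ)+1)) ≤ 4^m*4^m*(2*(2*(m:ℝ)+2)) := by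
      have h2 := mul_le_mul_of_nonneg_right h1
        (le_of_lt (show (0:ℝ) < 2*(2*(m:ℝ)+2) by positivity))
      calc (2*(m:ℝ)+1)*π*(c^2*(2*(m:ℝ)+1))
          = (2*(m:ℝ)+1)/(2*(m:ℝ)+2)*(π/2)*(c^2*(2*(m:ℝ)+1))*(2*(2*(m:ℝ)+2)) := by
            field_simp
        _ ≤ _ := h2
    nlinarith [h1', mul_nonneg (sq_nonneg c) hπ.le, hm']
  have hs : (0:ℝ) < Real.sqrt (π * m) := Real.sqrt_pos.mpr (by positivity)
  rw [le_div_iff₀ hs]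
  have h4 : (0:ℝ) < (4:ℝ)^m := by positivity
  have hsq : (c * Real.sqrt (π * m))^2 ≤ ((4:ℝ)^m)^2 := by
    rw [mul_pow, Real.sq_sqrt (by positivity : (0:ℝ) ≤ π * m)]
    nlinarith [key]
  nlinarith [mul_pos hcpos hs, hsq, h4]

open Finset
open scoped symmDiff

lemma zmod2_ne_iff (a b c : ZMod 2) : (a ≠ c) ↔ ¬((a ≠ b) ↔ (b ≠ c)) := by revert a b c; decide

lemma zmod2_eq_of (a b c : ZMod 2) (h : (a ≠ c) ↔ (b ≠ c)) : a = b := by revert a b c; decide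

lemma card_le_choose (n : ℕ) (x x' : Fin n → ZMod 2) (he : Even n)
    (hd : Even (hammingDist x x')) (hdn : hammingDist x x' ≤ n) :
    Nat.card ({y | hammingDist y x = n / 2} ∩ {y | hammingDist y x' = n / 2} :
        Set (Fin n → ZMod 2))
      ≤ (hammingDist x x').choose (hammingDist x x' / 2) *
        (n - hammingDist x x').choose ((n - hammingDist x x') / 2) := by
  classical
  set d := hammingDist x x' with hdf
  set D : Finset (Fin n) := {i | x i ≠ x' i} with hD
  have hDcard : D.card = d := rfl
  set A : Set (Fin n → ZMod 2) :=
    ({y | hammingDist y x = n / 2} ∩ {y | hammingDist y x' = n / 2}) with hA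
  have hcard : Nat.card A = A.toFinset.card := by
    rw [Nat.card_eq_fintype_card, Set.toFinset_card]
  rw [hcard]
  set S : (Fin n → ZMod 2) → Finset (Fin n) := fun y => {i | y i ≠ x i} with hS
  have key : ∀ y ∈ A.toFinset,
      ((S y ∩ D).card = d / 2 ∧ (S y \ D).card = (n - d) / 2) := by
    intro y hy
    rw [Set.mem_toFinset, hA] at hy
    obtain ⟨h1, h2⟩ := hy
    have hy1 : (S y).card = n / 2 := h1
    have hsymm : ({i | y i ≠ x' i} : Finset (Fin n)) = S y ∆ D := by
      ext i
      simp only [Finset.mem_symmDiff, hS, hD, Finset.mem_filter, Finset.mem_univ, true_and]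
      rw [show (y i ≠ x' i) ↔ ¬((y i ≠ x i) ↔ (x i ≠ x' i)) from zmod2_ne_iff _ _ _]
      tauto
    have hy2 : (S y ∆ D).card = n / 2 := by rw [← hsymm]; exact h2
    have hsd : (S y ∆ D).card = (S y \ D).card + (D \ S y).card := by
      rw [symmDiff_def]
      exact Finset.card_union_of_disjoint (disjoint_sdiff_sdiff)
    have e1 : (S y ∩ D).card + (S y \ D).card = (S y).card :=
      Finset.card_inter_add_card_sdiff _ _
    have e2 : (D ∩ S y).card + (D \ S y).card = D.card :=
      Finset.card_inter_add_card_sdiff _ _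
    have e3 : (D ∩ S y) = (S y ∩ D) := Finset.inter_comm _ _
    rw [e3] at e2
    rw [hsd] at hy2
    have hev_n : n % 2 = 0 := Nat.even_iff.mp he
    have hev_d : d % 2 = 0 := Nat.even_iff.mp hd
    omega
  have inj : Set.InjOn (fun y => ((S y ∩ D), (S y \ D))) A.toFinset := by
    intro y hy y' hy' h
    simp only [Prod.mk.injEq] at h
    have hSeq : S y = S y' := by
      have h3 := congrArg₂ (· ∪ ·) h.2 h.1
      simpa [Finset.sdiff_union_inter] using h3
    funext i
    have : (i ∈ S y) ↔ (i ∈ S y') := by rw [hSeq]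
    simp only [hS, Finset.mem_filter, Finset.mem_univ, true_and] at this
    exact zmod2_eq_of _ _ _ this
  calc A.toFinset.card
      ≤ ((D.powersetCard (d / 2)) ×ˢ (Dᶜ.powersetCard ((n - d) / 2))).card := by
        apply Finset.card_le_card_of_injOn (fun y => ((S y ∩ D), (S y \ D)))
        · intro y hy
          obtain ⟨k1, k2⟩ := key y hy
          simp only [Finset.mem_coe, Finset.mem_product, Finset.mem_powersetCard]
          exact ⟨⟨Finset.inter_subset_right, k1⟩,
            ⟨fun i hi => Finset.mem_compl.mpr (Finset.mem_sdiff.mp hi).2, k2⟩⟩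
        · exact fun y hy y' hy' h => inj hy hy' h
    _ = d.choose (d / 2) * (n - d).choose ((n - d) / 2) := by
        rw [Finset.card_product, Finset.card_powersetCard, Finset.card_powersetCard,
          hDcard, Finset.card_compl, hDcard, Fintype.card_fin]

theorem stmt8 (n : ℕ) (hn : 0 < n) (he : Even n) (x x' : Fin n → ZMod 2)
    (hne : x ≠ x') (δ : ℝ) (hδ0 : 0 ≤ δ) (hδ : δ < 1 / 2)
    (heven : Even (hammingDist x x'))
    (hlo : ((1 : ℝ) / 2 - δ) * n ≤ hammingDist x x')
    (hhi : (hammingDist x x' : ℝ) ≤ ((1 : ℝ) / 2 + δ) * n) :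
    (Nat.card ({y | hammingDist y x = n / 2} ∩ {y | hammingDist y x' = n / 2} :
        Set (Fin n → ZMod 2)) : ℝ)
      ≤ 2 ^ (n + 2) / (Real.pi * n * Real.sqrt (1 - 4 * δ ^ 2)) := by
  have hπ := Real.pi_pos
  set d := hammingDist x x' with hdf
  have hnr : (0:ℝ) < n := by exact_mod_cast hn
  have hd0 : 0 < d := Nat.pos_of_ne_zero (fun h => hne (hammingDist_eq_zero.mp h))
  have hδ2 : (0:ℝ) < 1 - 4 * δ ^ 2 := by nlinarith
  have hdltn : d < n := by
    have : (d:ℝ) < n := by nlinarith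
    exact_mod_cast this
  have hdn : d ≤ n := hdltn.le
  -- split d = 2*d2, n - d = 2*m2
  obtain ⟨d2, hd2⟩ : ∃ d2, d = 2 * d2 := by
    obtain ⟨k, hk⟩ := heven; exact ⟨k, by omega⟩
  · have hnd_even : Even (n - d) := by
      rw [Nat.even_sub hdn]; exact ⟨fun _ => heven, fun _ => he⟩
    obtain ⟨m2, hm2⟩ : ∃ m2, n - d = 2 * m2 := ⟨(n - d) / 2, by
      rcases hnd_even with ⟨k, hk⟩; omega⟩
    have hd2pos : 0 < d2 := by omega
    have hm2pos : 0 < m2 := by omega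
    have hcount := card_le_choose n x x' he heven hdn
    rw [← hdf] at hcount
    have hch1 : d.choose (d / 2) = Nat.centralBinom d2 := by
      rw [Nat.centralBinom_eq_two_mul_choose, ← hd2]; congr 1; omega
    have hch2 : (n - d).choose ((n - d) / 2) = Nat.centralBinom m2 := by
      rw [Nat.centralBinom_eq_two_mul_choose, ← hm2]; congr 1; omega
    rw [hch1, hch2] at hcount
    have hb1 := centralBinom_le_real d2 hd2pos
    have hb2 := centralBinom_le_real m2 hm2pos
    have hd2r : (0:ℝ) < d2 := by exact_mod_cast hd2pos
    have hm2r : (0:ℝ) < m2 := by exact_mod_cast hm2pos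
    have hs1 : (0:ℝ) < Real.sqrt (Real.pi * d2) := Real.sqrt_pos.mpr (by positivity)
    have hs2 : (0:ℝ) < Real.sqrt (Real.pi * m2) := Real.sqrt_pos.mpr (by positivity)
    have step1 : ((Nat.centralBinom d2 * Nat.centralBinom m2 : ℕ) : ℝ)
        ≤ (4 ^ d2 / Real.sqrt (Real.pi * d2)) * (4 ^ m2 / Real.sqrt (Real.pi * m2)) := by
      push_cast
      apply mul_le_mul hb1 hb2 (by positivity) (by positivity)
    -- simplify the product
    have hprod : (4 ^ d2 / Real.sqrt (Real.pi * d2)) * (4 ^ m2 / Real.sqrt (Real.pi * m2))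
        = 2 ^ n / (Real.pi * Real.sqrt ((d2 : ℝ) * m2)) := by
      rw [_root_.div_mul_div_comm, ← Real.sqrt_mul (by positivity)]
      congr 1
      · rw [← pow_add, show (4:ℝ) = 2^2 by norm_num, ← pow_mul]
        congr 1
        omega
      · rw [show Real.pi * (d2:ℝ) * (Real.pi * (m2:ℝ)) = Real.pi^2 * ((d2:ℝ)*(m2:ℝ)) by ring,
          Real.sqrt_mul (by positivity), Real.sqrt_sq hπ.le]
    -- compare with the target
    have hfinal : 2 ^ n / (Real.pi * Real.sqrt ((d2 : ℝ) * m2))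
        ≤ 2 ^ (n + 2) / (Real.pi * n * Real.sqrt (1 - 4 * δ ^ 2)) := by
      have hsq : (n:ℝ) * Real.sqrt (1 - 4 * δ ^ 2) ≤ 4 * Real.sqrt ((d2:ℝ) * m2) := by
        have h1 : (n:ℝ) * Real.sqrt (1 - 4 * δ ^ 2) = Real.sqrt ((n:ℝ)^2 * (1 - 4*δ^2)) := by
          rw [Real.sqrt_mul (by positivity), Real.sqrt_sq hnr.le]
        have h2 : Real.sqrt (16 * ((d2:ℝ)*m2)) = (4:ℝ) * Real.sqrt ((d2:ℝ) * m2) := by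
          rw [show (16:ℝ) = 4^2 by norm_num]
          rw [Real.sqrt_mul (by positivity : (0:ℝ) ≤ (4:ℝ)^2)]
          rw [Real.sqrt_sq (by norm_num : (0:ℝ) ≤ (4:ℝ))]
        rw [h1, ← h2]
        apply Real.sqrt_le_sqrt
        have hdr : (d2:ℝ) = (d:ℝ) / 2 := by
          have : (d:ℝ) = 2 * d2 := by exact_mod_cast hd2
          linarith
        have hmr : (m2:ℝ) = ((n:ℝ) - d) / 2 := by
          have h3 : ((n - d : ℕ) : ℝ) = 2 * m2 := by exact_mod_cast hm2
          rw [Nat.cast_sub hdn] at h3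
          linarith
        rw [hdr, hmr]
        nlinarith [mul_nonneg (sub_nonneg.mpr hlo) (sub_nonneg.mpr hhi),
          mul_nonneg (sub_nonneg.mpr hhi) (sub_nonneg.mpr hlo)]
      rw [div_le_div_iff₀ (by positivity) (by positivity)]
      have h2p : (0:ℝ) < (2:ℝ)^n := by positivity
      calc (2:ℝ) ^ n * (Real.pi * n * Real.sqrt (1 - 4 * δ ^ 2))
          = Real.pi * (2:ℝ)^n * ((n:ℝ) * Real.sqrt (1 - 4 * δ ^ 2)) := by ring
        _ ≤ Real.pi * (2:ℝ)^n * (4 * Real.sqrt ((d2:ℝ) * m2)) := by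
            apply mul_le_mul_of_nonneg_left hsq (by positivity)
        _ = 2 ^ (n + 2) * (Real.pi * Real.sqrt ((d2:ℝ) * m2)) := by
            rw [pow_add]; ring
    calc (Nat.card ({y | hammingDist y x = n / 2} ∩ {y | hammingDist y x' = n / 2} :
          Set (Fin n → ZMod 2)) : ℝ)
        ≤ ((Nat.centralBinom d2 * Nat.centralBinom m2 : ℕ) : ℝ) := by exact_mod_cast hcount
      _ ≤ (4 ^ d2 / Real.sqrt (Real.pi * d2)) * (4 ^ m2 / Real.sqrt (Real.pi * m2)) := step1
      _ = 2 ^ n / (Real.pi * Real.sqrt ((d2 : ℝ) * m2)) := hprod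
      _ ≤ 2 ^ (n + 2) / (Real.pi * n * Real.sqrt (1 - 4 * δ ^ 2)) := hfinal
end

section
/- Let C_1 be a linear subspace of F_2^n and let C_2 be the random linear subspace spanned by C_1 together with t = ceil(log_2 n) words chosen independently and uniformly from F_2^n. Then Prob{ Q(C_2) > 0 } <= 8 Q(C_1). -/
open Finset


abbrev Wd (n : ℕ) := Fin n → ZMod 2

lemma wd_add_self {n : ℕ} (w : Wd n) : w + w = 0 := by
  funext i
  have h : ∀ a : ZMod 2, a + a = 0 := by decide
  exact h (w i)

def stepSet {n : ℕ} (S : Finset (Wd n)) (v : Wd n) : Finset (Wd n) :=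
  S ∩ S.image (· + v)

lemma mem_stepSet {n : ℕ} {S : Finset (Wd n)} {v y : Wd n} :
    y ∈ stepSet S v ↔ y ∈ S ∧ y + v ∈ S := by
  unfold stepSet
  simp only [Finset.mem_inter, Finset.mem_image]
  constructor
  · rintro ⟨hy, z, hz, rfl⟩
    refine ⟨hy, ?_⟩
    have : z + v + v = z := by rw [add_assoc, wd_add_self, add_zero]
    rwa [this]
  · rintro ⟨hy, hyv⟩
    exact ⟨hy, ⟨y + v, hyv, by rw [add_assoc, wd_add_self, add_zero]⟩⟩

lemma stepSet_subset {n : ℕ} (S : Finset (Wd n)) (v : Wd n) : stepSet S v ⊆ S :=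
  Finset.inter_subset_left

lemma sum_stepSet {n : ℕ} (S : Finset (Wd n)) :
    ∑ v : Wd n, (stepSet S v).card = S.card ^ 2 := by
  have h1 : ∀ v : Wd n, (stepSet S v).card = (S.filter (fun y => y + v ∈ S)).card := by
    intro v
    congr 1
    ext y
    simp [mem_stepSet, Finset.mem_filter]
  simp only [h1, Finset.card_filter]
  rw [Finset.sum_comm]
  have h2 : ∀ y : Wd n, ∑ v : Wd n, (if y + v ∈ S then 1 else 0) = S.card := by
    intro y
    rw [← Finset.card_filter]
    apply Finset.card_bij (fun v _ => y + v)
    · intro v hv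
      simpa using (Finset.mem_filter.mp hv).2
    · intro a ha b hb hab
      exact add_left_cancel hab
    · intro s hs
      refine ⟨y + s, ?_, ?_⟩
      · simp only [Finset.mem_filter, Finset.mem_univ, true_and]
        rwa [← add_assoc, wd_add_self, zero_add]
      · rw [← add_assoc, wd_add_self, zero_add]
  calc ∑ y ∈ S, ∑ v : Wd n, (if y + v ∈ S then 1 else 0)
      = ∑ y ∈ S, S.card := Finset.sum_congr rfl (fun y _ => h2 y)
    _ = S.card ^ 2 := by rw [Finset.sum_const, smul_eq_mul, sq]

def surv {n : ℕ} (B : Finset (Wd n)) (l : List (Wd n)) : Finset (Wd n) :=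
  l.foldl stepSet B

@[simp] lemma surv_nil {n : ℕ} (B : Finset (Wd n)) : surv B [] = B := rfl

@[simp] lemma surv_cons {n : ℕ} (B : Finset (Wd n)) (v : Wd n) (l : List (Wd n)) :
    surv B (v :: l) = surv (stepSet B v) l := rfl

lemma surv_empty {n : ℕ} (l : List (Wd n)) : surv (∅ : Finset (Wd n)) l = ∅ := by
  induction l with
  | nil => rfl
  | cons v l ih =>
      have : stepSet (∅ : Finset (Wd n)) v = ∅ := by
        simp [stepSet]
      rw [surv_cons, this, ih]

lemma mem_surv {n : ℕ} (l : List (Wd n)) : ∀ (B : Finset (Wd n)) (y : Wd n),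
    y ∈ surv B l ↔ ∀ s ∈ Submodule.span (ZMod 2) {v : Wd n | v ∈ l}, y + s ∈ B := by
  induction l with
  | nil =>
      intro B y
      have hset : {v : Wd n | v ∈ ([] : List (Wd n))} = (∅ : Set (Wd n)) := by
        ext v; simp
      rw [surv_nil, hset, Submodule.span_empty]
      constructor
      · intro hy s hs
        have : s = 0 := by simpa using hs
        rwa [this, add_zero]
      · intro h
        have := h 0 (by simp)
        rwa [add_zero] at this
  | cons v l ih =>
      intro B y
      have hset : {w : Wd n | w ∈ v :: l} = insert v {w : Wd n | w ∈ l} := by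
        ext w; simp [List.mem_cons]
      rw [surv_cons, hset]
      rw [ih (stepSet B v) y]
      constructor
      · intro h s hs
        rw [Submodule.mem_span_insert] at hs
        obtain ⟨a, z, hz, rfl⟩ := hs
        have ha : a = 0 ∨ a = 1 := by
          have : ∀ b : ZMod 2, b = 0 ∨ b = 1 := by decide
          exact this a
        rcases ha with rfl | rfl
        · rw [zero_smul, zero_add]
          exact (mem_stepSet.mp (h z hz)).1
        · rw [one_smul]
          have h2 := (mem_stepSet.mp (h z hz)).2
          rwa [add_comm v z, ← add_assoc]
      · intro h s hs
        rw [mem_stepSet]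
        constructor
        · exact h s (Submodule.span_mono (Set.subset_insert _ _) hs)
        · have hv : v + s ∈ Submodule.span (ZMod 2) (insert v {w : Wd n | w ∈ l}) :=
            Submodule.add_mem _ (Submodule.subset_span (Set.mem_insert _ _))
              (Submodule.span_mono (Set.subset_insert _ _) hs)
          have := h (v + s) hv
          have e : y + s + v = y + (v + s) := by
            rw [add_assoc, add_comm s v]
          rw [e]
          exact this

lemma card_wd (n : ℕ) : Fintype.card (Wd n) = 2 ^ n := by
  simp [Fintype.card_fun]

lemma main_count {n : ℕ} : ∀ (k : ℕ) (B : Finset (Wd n)) (μ x : ℝ),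
    0 < μ → 0 ≤ x → (B.card : ℝ) ≤ μ * x * 2 ^ n →
    μ * x ^ (2 ^ k) * 2 ^ n < 2 ^ k →
    ((Finset.univ.filter
        (fun u : Fin k → Wd n => (surv B (List.ofFn u)).Nonempty)).card : ℝ)
      ≤ 4 * μ * ((2 : ℝ) ^ n) ^ k := by
  intro k
  classical
  induction k with
  | zero =>
      intro B μ x hμ hx hB hD
      have hB1 : (B.card : ℝ) < 1 := by
        refine lt_of_le_of_lt hB ?_
        simpa using hD
      have hB0 : B.card = 0 := by exact_mod_cast Nat.lt_one_iff.mp (by exact_mod_cast hB1)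
      have hBe : B = ∅ := Finset.card_eq_zero.mp hB0
      have : (Finset.univ.filter
          (fun u : Fin 0 → Wd n => (surv B (List.ofFn u)).Nonempty)) = ∅ := by
        apply Finset.filter_false_of_mem
        intro u _
        rw [show List.ofFn u = [] from List.ofFn_zero, surv_nil, hBe]
        simp [Finset.Nonempty]
      rw [this]
      simp only [Finset.card_empty, Nat.cast_zero, pow_zero, mul_one]
      positivity
  | succ k ih =>
      intro B μ x hμ hx hB hD
      have h2n : (0:ℝ) < 2 ^ n := by positivity
      -- threshold
      set T : ℝ := (B.card : ℝ) ^ 2 / (2 * μ * 2 ^ n) with hT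
      have hden : (0:ℝ) < 2 * μ * 2 ^ n := by positivity
      -- decompose the count
      have hdec : ((Finset.univ.filter
            (fun u : Fin (k+1) → Wd n => (surv B (List.ofFn u)).Nonempty)).card : ℝ)
          = ∑ v : Wd n, ((Finset.univ.filter
              (fun u' : Fin k → Wd n => (surv (stepSet B v) (List.ofFn u')).Nonempty)).card : ℝ) := by
        push_cast
        rw [Finset.card_filter]
        rw [← Fintype.sum_equiv (Fin.consEquiv (fun _ : Fin (k+1) => Wd n))
            (fun p : (Wd n) × (Fin k → Wd n) =>
              if (surv B (List.ofFn ((Fin.consEquiv (fun _ : Fin (k+1) => Wd n)) p))).Nonempty then (1:ℕ) else 0)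
            (fun u => if (surv B (List.ofFn u)).Nonempty then 1 else 0) (fun p => rfl)]
        rw [Fintype.sum_prod_type]
        push_cast
        refine Finset.sum_congr rfl (fun v _ => ?_)
        rw [Finset.card_filter]
        push_cast
        refine Finset.sum_congr rfl (fun u' _ => ?_)
        congr 1
        have : List.ofFn ((Fin.consEquiv (fun _ : Fin (k+1) => Wd n)) (v, u')) = v :: List.ofFn u' := by
          rw [List.ofFn_succ]
          simp [Fin.consEquiv]
        rw [this, surv_cons]
      -- stall set bound
      set p : Wd n → Prop := fun v => T < ((stepSet B v).card : ℝ) with hp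
      have hstall : ((Finset.univ.filter p).card : ℝ) ≤ 2 * μ * 2 ^ n := by
        by_cases hBc : B.card = 0
        · have : Finset.univ.filter p = ∅ := by
            apply Finset.filter_false_of_mem
            intro v _
            have h1 : (stepSet B v).card = 0 :=
              Nat.le_zero.mp (hBc ▸ Finset.card_le_card (stepSet_subset B v))
            rw [hp]
            simp only [h1, Nat.cast_zero, hT, hBc, Nat.cast_zero]
            norm_num
          rw [this]
          simp only [Finset.card_empty, Nat.cast_zero]
          positivity
        · have hBpos : (0:ℝ) < (B.card : ℝ) := by
            exact_mod_cast Nat.pos_of_ne_zero hBc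
          have hTpos : 0 < T := by
            rw [hT]; positivity
          have hsum : ((Finset.univ.filter p).card : ℝ) * T
              ≤ ((B.card : ℝ)) ^ 2 := by
            have h1 : ((Finset.univ.filter p).card) • T
                ≤ ∑ v ∈ Finset.univ.filter p, ((stepSet B v).card : ℝ) :=
              Finset.card_nsmul_le_sum _ _ _ (fun v hv => le_of_lt (Finset.mem_filter.mp hv).2)
            rw [nsmul_eq_mul] at h1
            refine h1.trans ?_
            have h2 : ∑ v ∈ Finset.univ.filter p, ((stepSet B v).card : ℝ)
                ≤ ∑ v : Wd n, ((stepSet B v).card : ℝ) :=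
              Finset.sum_le_sum_of_subset_of_nonneg (Finset.filter_subset _ _)
                (fun v _ _ => by positivity)
            refine h2.trans ?_
            rw [← Nat.cast_sum, sum_stepSet]
            push_cast
            exact le_rfl
          have : ((Finset.univ.filter p).card : ℝ)
              ≤ (B.card : ℝ) ^ 2 / T := by
            rw [le_div_iff₀ hTpos]; exact hsum
          have heq : (B.card : ℝ) ^ 2 / T = 2 * μ * 2 ^ n := by
            rw [hT]
            field_simp
          rw [heq] at this
          exact this
      -- per-v trivial bound
      have hcard_u : ∀ v : Wd n, ((Finset.univ.filter
          (fun u' : Fin k → Wd n => (surv (stepSet B v) (List.ofFn u')).Nonempty)).card : ℝ)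
          ≤ ((2:ℝ) ^ n) ^ k := by
        intro v
        have h1 : (Finset.univ.filter
            (fun u' : Fin k → Wd n => (surv (stepSet B v) (List.ofFn u')).Nonempty)).card
            ≤ (2 ^ n) ^ k := by
          refine (Finset.card_filter_le _ _).trans ?_
          rw [Finset.card_univ]
          rw [Fintype.card_fun, card_wd, Fintype.card_fin]
        exact_mod_cast h1
      -- good v bound via ih
      have hgood : ∀ v : Wd n, ¬ p v → ((Finset.univ.filter
          (fun u' : Fin k → Wd n => (surv (stepSet B v) (List.ofFn u')).Nonempty)).card : ℝ)
          ≤ 2 * μ * ((2:ℝ) ^ n) ^ k := by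
        intro v hv
        have hle : ((stepSet B v).card : ℝ) ≤ T := not_lt.mp hv
        have h3 : (B.card:ℝ) ^ 2 ≤ (μ * x * 2 ^ n) ^ 2 := by
          have := pow_le_pow_left₀ (by positivity : (0:ℝ) ≤ (B.card:ℝ)) hB 2
          exact this
        have hT2 : T ≤ μ / 2 * x ^ 2 * 2 ^ n := by
          rw [hT, div_le_iff₀ hden]
          nlinarith [h3]
        have hpow : (x ^ 2) ^ (2 ^ k) = x ^ (2 ^ (k+1)) := by
          rw [← pow_mul]
          congr 1
          rw [pow_succ, Nat.mul_comm]
        have hD' : μ / 2 * (x ^ 2) ^ (2 ^ k) * 2 ^ n < 2 ^ k := by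
          rw [hpow]
          have h4 : (2:ℝ) ^ (k+1) = 2 * 2 ^ k := by ring
          rw [h4] at hD
          linarith
        have := ih (stepSet B v) (μ / 2) (x ^ 2) (by positivity) (by positivity)
          (hle.trans hT2) hD'
        linarith
      -- combine
      rw [hdec, ← Finset.sum_filter_add_sum_filter_not Finset.univ p]
      have hS1 : ∑ v ∈ Finset.univ.filter p, ((Finset.univ.filter
          (fun u' : Fin k → Wd n => (surv (stepSet B v) (List.ofFn u')).Nonempty)).card : ℝ)
          ≤ (2 * μ * 2 ^ n) * ((2:ℝ) ^ n) ^ k := by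
        calc ∑ v ∈ Finset.univ.filter p, ((Finset.univ.filter
              (fun u' : Fin k → Wd n => (surv (stepSet B v) (List.ofFn u')).Nonempty)).card : ℝ)
            ≤ ∑ _v ∈ Finset.univ.filter p, ((2:ℝ) ^ n) ^ k :=
              Finset.sum_le_sum (fun v _ => hcard_u v)
          _ = ((Finset.univ.filter p).card : ℝ) * ((2:ℝ) ^ n) ^ k := by
              rw [Finset.sum_const, nsmul_eq_mul]
          _ ≤ (2 * μ * 2 ^ n) * ((2:ℝ) ^ n) ^ k := by
              have : (0:ℝ) ≤ ((2:ℝ) ^ n) ^ k := by positivity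
              exact mul_le_mul_of_nonneg_right hstall this
      have hS2 : ∑ v ∈ Finset.univ.filter (fun v => ¬ p v), ((Finset.univ.filter
          (fun u' : Fin k → Wd n => (surv (stepSet B v) (List.ofFn u')).Nonempty)).card : ℝ)
          ≤ (2:ℝ) ^ n * (2 * μ * ((2:ℝ) ^ n) ^ k) := by
        calc ∑ v ∈ Finset.univ.filter (fun v => ¬ p v), ((Finset.univ.filter
              (fun u' : Fin k → Wd n => (surv (stepSet B v) (List.ofFn u')).Nonempty)).card : ℝ)
            ≤ ∑ _v ∈ Finset.univ.filter (fun v => ¬ p v), (2 * μ * ((2:ℝ) ^ n) ^ k) :=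
              Finset.sum_le_sum (fun v hv => hgood v (Finset.mem_filter.mp hv).2)
          _ = ((Finset.univ.filter (fun v => ¬ p v)).card : ℝ) * (2 * μ * ((2:ℝ) ^ n) ^ k) := by
              rw [Finset.sum_const, nsmul_eq_mul]
          _ ≤ (2:ℝ) ^ n * (2 * μ * ((2:ℝ) ^ n) ^ k) := by
              have hc : ((Finset.univ.filter (fun v => ¬ p v)).card : ℝ) ≤ (2:ℝ) ^ n := by
                have := (Finset.card_filter_le Finset.univ (fun v => ¬ p v)).trans
                  (le_of_eq ((Finset.card_univ).trans (card_wd n)))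
                exact_mod_cast this
              have hpos : (0:ℝ) ≤ 2 * μ * ((2:ℝ) ^ n) ^ k := by positivity
              exact mul_le_mul_of_nonneg_right hc hpos
      have hfin : ((2:ℝ) ^ n) ^ (k + 1) = ((2:ℝ) ^ n) ^ k * 2 ^ n := pow_succ _ _
      rw [hfin]
      linarith



lemma card_ballHalf (n : ℕ) (C : Set (Wd n)) [DecidablePred (· ∈ ballHalf n C)] :
    Nat.card (ballHalf n C) = (Finset.univ.filter (· ∈ ballHalf n C)).card := by
  rw [Nat.card_eq_fintype_card]
  exact Fintype.card_subtype _

lemma qfrac_pos_iff (n : ℕ) (C : Set (Wd n)) : 0 < Qfrac n C ↔ ∃ y, y ∉ ballHalf n C := by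
  classical
  rw [Qfrac, sub_pos, div_lt_one (by positivity : (0:ℝ) < 2 ^ n)]
  rw [card_ballHalf n C]
  have h2 : ((2:ℝ) ^ n) = ((2 ^ n : ℕ) : ℝ) := by push_cast; ring
  rw [h2, Nat.cast_lt]
  have h3 : (2 : ℕ) ^ n = Fintype.card (Wd n) := by
    simp [Fintype.card_fun]
  rw [h3, Finset.card_lt_iff_ne_univ]
  rw [Ne, Finset.eq_univ_iff_forall]
  push_neg
  constructor
  · rintro ⟨y, hy⟩
    exact ⟨y, fun h => hy (Finset.mem_filter.mpr ⟨Finset.mem_univ _, h⟩)⟩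
  · rintro ⟨y, hy⟩
    exact ⟨y, fun h => hy (Finset.mem_filter.mp h).2⟩

lemma qfrac_nonneg (n : ℕ) (C : Set (Wd n)) : 0 ≤ Qfrac n C := by
  classical
  rw [Qfrac, sub_nonneg, div_le_one (by positivity : (0:ℝ) < 2 ^ n)]
  rw [card_ballHalf n C]
  have h2 : ((2:ℝ) ^ n) = ((2 ^ n : ℕ) : ℝ) := by push_cast; ring
  rw [h2, Nat.cast_le]
  have h3 : (2 : ℕ) ^ n = Fintype.card (Wd n) := by simp [Fintype.card_fun]
  rw [h3]
  exact (Finset.card_filter_le _ _).trans (le_of_eq Finset.card_univ)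

lemma hamming_shift {n : ℕ} (y c s : Wd n) :
    hammingDist (y + s) c = hammingDist y (c + s) := by
  unfold hammingDist
  congr 1
  apply Finset.filter_congr
  intro i _
  have h : ∀ a b e : ZMod 2, (a + e ≠ b) ↔ (a ≠ b + e) := by decide
  simpa using h (y i) (c i) (s i)

lemma half_weight_exists (n : ℕ) (hn2 : 2 ≤ n) :
    ∃ y : Wd n, hammingDist y 0 = n / 2 := by
  have hlt : n / 2 < n := Nat.div_lt_self (by omega) one_lt_two
  refine ⟨fun i => if (i : ℕ) < n / 2 then 1 else 0, ?_⟩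
  rw [hammingDist_zero_right]
  unfold hammingNorm
  have : (Finset.univ.filter
      (fun i : Fin n => (if (i : ℕ) < n / 2 then (1 : ZMod 2) else 0) ≠ 0))
      = Finset.Iio (⟨n / 2, hlt⟩ : Fin n) := by
    ext i
    simp only [Finset.mem_filter, Finset.mem_univ, true_and, Finset.mem_Iio]
    rw [Fin.lt_def]
    by_cases h : (i : ℕ) < n / 2 <;> simp [h]
  rw [this, Fin.card_Iio]

theorem stmt10 (n : ℕ) (hn : 0 < n) (he : Even n) (t : ℕ)
    (ht : t = ⌈Real.logb 2 n⌉₊)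
    (C₁ : Submodule (ZMod 2) (Fin n → ZMod 2)) :
    (Nat.card {u : Fin t → Fin n → ZMod 2 |
          0 < Qfrac n ↑(C₁ ⊔ Submodule.span (ZMod 2) (Set.range u))} : ℝ) / 2 ^ (n * t)
      ≤ 8 * Qfrac n ↑C₁ := by
  classical
  have hn2 : 2 ≤ n := by
    obtain ⟨m, rfl⟩ := he
    omega
  have h2n : (0:ℝ) < 2 ^ n := by positivity
  set q : ℝ := Qfrac n ↑C₁ with hqdef
  set A : Finset (Wd n) := Finset.univ.filter (fun y => y ∉ ballHalf n ↑C₁) with hAdef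
  have hA : ∀ y, y ∈ A ↔ y ∉ ballHalf n ↑C₁ := by
    intro y; simp [hAdef]
  -- q * 2^n = A.card
  have hq : (A.card : ℝ) = q * 2 ^ n := by
    have hsum : (Finset.univ.filter (· ∈ ballHalf n ↑C₁)).card + A.card = 2 ^ n := by
      rw [hAdef]
      rw [Finset.card_filter_add_card_filter_not]
      rw [Finset.card_univ]
      simp [Fintype.card_fun]
    have hcast : ((Finset.univ.filter (· ∈ ballHalf n ↑C₁)).card : ℝ) + (A.card : ℝ)
        = 2 ^ n := by
      exact_mod_cast hsum
    have hqe : q = 1 - ((Finset.univ.filter (· ∈ ballHalf n ↑C₁)).card : ℝ) / 2 ^ n := by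
      rw [hqdef, Qfrac, card_ballHalf]
    rw [hqe]
    field_simp
    linarith
  -- equivalence of badness
  have badIff : ∀ u : Fin t → Wd n,
      (0 < Qfrac n ↑(C₁ ⊔ Submodule.span (ZMod 2) (Set.range u))
        ↔ (surv A (List.ofFn u)).Nonempty) := by
    intro u
    rw [qfrac_pos_iff]
    have key : ∀ y : Wd n,
        y ∉ ballHalf n ↑(C₁ ⊔ Submodule.span (ZMod 2) (Set.range u))
          ↔ y ∈ surv A (List.ofFn u) := by
      intro y
      rw [mem_surv]
      have hsetspan : {v : Wd n | v ∈ List.ofFn u} = Set.range u := by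
        ext w; simp [List.mem_ofFn]
      rw [hsetspan]
      constructor
      · intro hy s hs
        rw [hA]
        intro hball
        obtain ⟨c, hc, hd⟩ := hball
        apply hy
        refine ⟨c + s, ?_, ?_⟩
        · rw [SetLike.mem_coe] at hc ⊢
          exact Submodule.mem_sup.mpr ⟨c, hc, s, hs, rfl⟩
        · rw [← hamming_shift]; exact hd
      · intro h hball
        obtain ⟨z, hz, hd⟩ := hball
        rw [SetLike.mem_coe, Submodule.mem_sup] at hz
        obtain ⟨c, hc, s, hs, rfl⟩ := hz
        have h2 := h s hs
        rw [hA] at h2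
        exact h2 ⟨c, hc, by rw [hamming_shift]; exact hd⟩
    constructor
    · rintro ⟨y, hy⟩
      exact ⟨y, (key y).mp hy⟩
    · rintro ⟨y, hy⟩
      exact ⟨y, (key y).mpr hy⟩
  -- rewrite Nat.card as a filter card
  have hcardeq : (Nat.card {u : Fin t → Wd n |
        0 < Qfrac n ↑(C₁ ⊔ Submodule.span (ZMod 2) (Set.range u))} : ℕ)
      = (Finset.univ.filter
          (fun u : Fin t → Wd n => (surv A (List.ofFn u)).Nonempty)).card := by
    rw [Nat.card_eq_fintype_card]
    rw [Fintype.card_subtype]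
    congr 1
    apply Finset.filter_congr
    intro u _
    simp only [Set.mem_setOf_eq]
    exact ⟨fun h => (badIff u).mp h, fun h => (badIff u).mpr h⟩
  rw [hcardeq]
  have hq0 : 0 ≤ q := qfrac_nonneg n _
  rcases Nat.eq_zero_or_pos A.card with hA0 | hApos
  · -- A empty
    have hAe : A = ∅ := Finset.card_eq_zero.mp hA0
    have : (Finset.univ.filter
        (fun u : Fin t → Wd n => (surv A (List.ofFn u)).Nonempty)) = ∅ := by
      apply Finset.filter_false_of_mem
      intro u _
      rw [hAe, surv_empty]
      simp [Finset.Nonempty]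
    rw [this]
    simp only [Finset.card_empty, Nat.cast_zero, zero_div]
    linarith
  · -- main case
    have hqpos : 0 < q := by
      have : (0:ℝ) < (A.card : ℝ) := by exact_mod_cast hApos
      rw [hq] at this
      nlinarith [h2n]
    -- q < 1
    have hq1 : q < 1 := by
      obtain ⟨y₀, hy₀⟩ := half_weight_exists n hn2
      have hy₀b : y₀ ∈ ballHalf n ↑C₁ := ⟨0, by simp, hy₀⟩
      have hAne : A ≠ Finset.univ := by
        intro hcontra
        have : y₀ ∈ A := hcontra ▸ Finset.mem_univ y₀
        exact (hA y₀).mp this hy₀b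
      have hlt : A.card < 2 ^ n := by
        have := Finset.card_lt_iff_ne_univ A |>.mpr hAne
        rw [Fintype.card_fun, Fintype.card_fin] at this
        simpa using this
      have : (A.card : ℝ) < 2 ^ n := by exact_mod_cast hlt
      rw [hq] at this
      nlinarith
    -- t bounds
    have hn1 : (1:ℝ) < (n:ℝ) := by exact_mod_cast hn2.trans_lt' one_lt_two
    have ht1 : 1 ≤ t := by
      rw [ht]
      exact Nat.ceil_pos.mpr (Real.logb_pos one_lt_two hn1)
    have hnt : n ≤ 2 ^ t := by
      have hlog : Real.logb 2 (n:ℝ) ≤ (t:ℝ) := by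
        rw [ht]; exact Nat.le_ceil _
      have h1 : (n:ℝ) = (2:ℝ) ^ (Real.logb 2 (n:ℝ)) :=
        (Real.rpow_logb (by norm_num) (by norm_num) (by positivity)).symm
      have h2 : (2:ℝ) ^ (Real.logb 2 (n:ℝ)) ≤ (2:ℝ) ^ ((t:ℝ)) :=
        Real.rpow_le_rpow_of_exponent_le one_le_two hlog
      have h3 : (n:ℝ) ≤ (2:ℝ) ^ (t:ℕ) := by
        rw [← Real.rpow_natCast 2 t]
        exact h1.trans_le h2
      exact_mod_cast h3
    -- apply main_count
    have hdeath : 2 * q * (1/2 : ℝ) ^ (2 ^ t) * 2 ^ n < 2 ^ t := by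
      have hp1 : ((1/2 : ℝ)) ^ (2 ^ t) ≤ (1/2 : ℝ) ^ n :=
        pow_le_pow_of_le_one (by norm_num) (by norm_num) hnt
      have hp2 : ((1/2 : ℝ)) ^ n * 2 ^ n = 1 := by
        rw [← mul_pow]; norm_num
      have hp3 : ((1/2 : ℝ)) ^ (2 ^ t) * 2 ^ n ≤ 1 := by
        calc ((1/2 : ℝ)) ^ (2 ^ t) * 2 ^ n ≤ (1/2 : ℝ) ^ n * 2 ^ n :=
              mul_le_mul_of_nonneg_right hp1 (le_of_lt h2n)
          _ = 1 := hp2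
      have hp4 : (2:ℝ) ≤ 2 ^ t := by
        calc (2:ℝ) = 2 ^ 1 := (pow_one 2).symm
          _ ≤ 2 ^ t := pow_le_pow_right₀ one_le_two ht1
      calc 2 * q * (1/2 : ℝ) ^ (2 ^ t) * 2 ^ n
          = 2 * q * ((1/2 : ℝ) ^ (2 ^ t) * 2 ^ n) := by ring
        _ ≤ 2 * q * 1 := by
            apply mul_le_mul_of_nonneg_left hp3 (by positivity)
        _ < 2 := by nlinarith
        _ ≤ 2 ^ t := hp4
    have hmain := main_count t A (2 * q) (1/2) (by positivity) (by norm_num)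
      (by rw [hq]; nlinarith) hdeath
    have hpow : ((2:ℝ) ^ n) ^ t = (2:ℝ) ^ (n * t) := by
      rw [← pow_mul]
    rw [hpow] at hmain
    rw [div_le_iff₀ (by positivity : (0:ℝ) < (2:ℝ) ^ (n * t))]
    calc ((Finset.univ.filter
          (fun u : Fin t → Wd n => (surv A (List.ofFn u)).Nonempty)).card : ℝ)
        ≤ 4 * (2 * q) * (2:ℝ) ^ (n * t) := hmain
      _ = 8 * q * 2 ^ (n * t) := by ring
end

section
/- With C_0 as the extended simplex code of length M = 2^m, for every y in F_2^M there exists a codeword c in C_0 such that |M/2 - d(y,c)| <= sqrt(M)/2; i.e., C_0 is a floor(sqrt(M)/2)-almost-balancing set. -/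
open Finset

def extSimplexWord (m : ℕ) (v : Fin m → ZMod 2) : (Fin m → ZMod 2) → ZMod 2 :=
  fun u => ∑ i, v i * u i

def chi (x : ZMod 2) : ℤ := if x = 0 then 1 else -1

lemma chi_add (a b : ZMod 2) : chi (a + b) = chi a * chi b := by
  revert a b; decide

lemma chi_sq (a : ZMod 2) : chi a * chi a = 1 := by revert a; decide

lemma cardX (m : ℕ) : Fintype.card (Fin m → ZMod 2) = 2 ^ m := by
  simp [Fintype.card_fun]

lemma phi_linear (m : ℕ) (v u u' : Fin m → ZMod 2) :
    extSimplexWord m v (u + u') = extSimplexWord m v u + extSimplexWord m v u' := by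
  simp [extSimplexWord, Pi.add_apply, mul_add, Finset.sum_add_distrib]

lemma orth (m : ℕ) (w : Fin m → ZMod 2) (hw : w ≠ 0) :
    ∑ v : Fin m → ZMod 2, chi (extSimplexWord m v w) = 0 := by
  obtain ⟨i₀, hi₀⟩ : ∃ i, w i ≠ 0 := by
    by_contra h; push_neg at h; exact hw (funext fun i => h i)
  have hw1 : w i₀ = 1 := by
    have : ∀ a : ZMod 2, a ≠ 0 → a = 1 := by decide
    exact this _ hi₀
  apply Finset.sum_ninvolution (fun v => Function.update v i₀ (v i₀ + 1))
  · intro v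
    have hkey : extSimplexWord m (Function.update v i₀ (v i₀ + 1)) w
        = extSimplexWord m v w + 1 := by
      unfold extSimplexWord
      have hpt : ∀ i, Function.update v i₀ (v i₀ + 1) i * w i
          = v i * w i + (if i = i₀ then 1 else 0) := by
        intro i
        by_cases h : i = i₀
        · subst h; rw [Function.update_self, hw1, if_pos rfl]; ring
        · rw [Function.update_of_ne h, if_neg h, add_zero]
      rw [Finset.sum_congr rfl fun i _ => hpt i, Finset.sum_add_distrib]
      simp
    rw [hkey]
    have : ∀ a : ZMod 2, chi a + chi (a + 1) = 0 := by decide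
    exact this _
  · intro v _ h
    have := congrFun h i₀
    rw [Function.update_self] at this
    have h2 : ∀ a : ZMod 2, a + 1 ≠ a := by decide
    exact h2 _ this
  · intro v; exact Finset.mem_univ _
  · intro v
    rw [Function.update_idem, Function.update_self]
    have : v i₀ + 1 + 1 = v i₀ := by
      have : ∀ a : ZMod 2, a + 1 + 1 = a := by decide
      exact this _
    rw [this, Function.update_eq_self]

lemma innerOrthSum (m : ℕ) (u u' : Fin m → ZMod 2) :
    ∑ v : Fin m → ZMod 2, chi (extSimplexWord m v (u + u'))
      = if u = u' then (2 ^ m : ℤ) else 0 := by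
  by_cases h : u = u'
  · subst h
    have h0 : u + u = 0 := by
      funext i
      exact (by decide : ∀ a : ZMod 2, a + a = 0) (u i)
    rw [h0]
    have : ∀ v : Fin m → ZMod 2, extSimplexWord m v 0 = 0 := by
      intro v; simp [extSimplexWord]
    simp only [this]
    simp [chi, Finset.card_univ, cardX]
  · rw [if_neg h]
    apply orth
    intro hc
    apply h
    funext i
    have := congrFun hc i
    simp only [Pi.add_apply, Pi.zero_apply] at this
    exact ((by decide : ∀ a b : ZMod 2, a + b = 0 → a = b) _ _ this)

lemma key (m : ℕ) (y : (Fin m → ZMod 2) → ZMod 2) :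
    ∑ v : Fin m → ZMod 2,
        (∑ u : Fin m → ZMod 2, chi (y u + extSimplexWord m v u)) ^ 2
      = 2 ^ m * 2 ^ m := by
  have step1 : ∀ v : Fin m → ZMod 2,
      (∑ u : Fin m → ZMod 2, chi (y u + extSimplexWord m v u)) ^ 2
        = ∑ u : Fin m → ZMod 2, ∑ u' : Fin m → ZMod 2,
            chi (y u) * chi (y u') * chi (extSimplexWord m v (u + u')) := by
    intro v
    rw [sq, Finset.sum_mul_sum]
    refine Finset.sum_congr rfl fun u _ => Finset.sum_congr rfl fun u' _ => ?_
    rw [chi_add, chi_add, phi_linear, chi_add]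
    ring
  calc ∑ v : Fin m → ZMod 2,
        (∑ u : Fin m → ZMod 2, chi (y u + extSimplexWord m v u)) ^ 2
      = ∑ v : Fin m → ZMod 2, ∑ u : Fin m → ZMod 2, ∑ u' : Fin m → ZMod 2,
          chi (y u) * chi (y u') * chi (extSimplexWord m v (u + u')) := by
        exact Finset.sum_congr rfl fun v _ => step1 v
    _ = ∑ u : Fin m → ZMod 2, ∑ u' : Fin m → ZMod 2, ∑ v : Fin m → ZMod 2,
          chi (y u) * chi (y u') * chi (extSimplexWord m v (u + u')) := by
        rw [Finset.sum_comm]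
        exact Finset.sum_congr rfl fun u _ => Finset.sum_comm
    _ = ∑ u : Fin m → ZMod 2, ∑ u' : Fin m → ZMod 2,
          chi (y u) * chi (y u') * (if u = u' then (2 ^ m : ℤ) else 0) := by
        refine Finset.sum_congr rfl fun u _ => Finset.sum_congr rfl fun u' _ => ?_
        rw [← Finset.mul_sum, innerOrthSum]
    _ = ∑ u : Fin m → ZMod 2, (2 ^ m : ℤ) := by
        refine Finset.sum_congr rfl fun u _ => ?_
        rw [Finset.sum_eq_single u]
        · simp [chi_sq]
        · intro u' _ hne
          simp [Ne.symm hne]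
        · intro h; exact absurd (Finset.mem_univ u) h
    _ = 2 ^ m * 2 ^ m := by
        rw [Finset.sum_const, Finset.card_univ, cardX]
        simp [mul_comm]

lemma dist_eq (m : ℕ) (y c : (Fin m → ZMod 2) → ZMod 2) :
    (2 ^ m : ℤ) - 2 * hammingDist y c = ∑ u, chi (y u + c u) := by
  have hpt : ∀ a b : ZMod 2, chi (a + b) = 1 - 2 * (if a = b then 0 else 1) := by decide
  have hd : (hammingDist y c : ℤ) = ∑ u, (if y u = c u then 0 else 1) := by
    unfold hammingDist
    rw [Finset.card_filter]
    push_cast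
    refine Finset.sum_congr rfl fun u _ => ?_
    by_cases h : y u = c u <;> simp [h]
  rw [hd, Finset.sum_congr rfl fun u _ => hpt (y u) (c u), Finset.sum_sub_distrib,
    ← Finset.mul_sum]
  simp [Finset.card_univ, cardX]

theorem stmt16 (m : ℕ) (hm : 0 < m) (y : (Fin m → ZMod 2) → ZMod 2) :
    ∃ v : Fin m → ZMod 2,
      |(2 ^ m : ℝ) / 2 - hammingDist y (extSimplexWord m v)|
        ≤ Real.sqrt (2 ^ m) / 2 := by
  set B : (Fin m → ZMod 2) → ℤ :=
    fun v => (2 ^ m : ℤ) - 2 * hammingDist y (extSimplexWord m v) with hB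
  have hBsum : ∑ v : Fin m → ZMod 2, (B v) ^ 2 = 2 ^ m * 2 ^ m := by
    have hpt : ∀ v, (B v) ^ 2
        = (∑ u : Fin m → ZMod 2, chi (y u + extSimplexWord m v u)) ^ 2 := by
      intro v
      rw [hB]
      dsimp only
      rw [dist_eq]
    rw [Finset.sum_congr rfl fun v _ => hpt v]
    exact key m y
  have hex : ∃ v, (B v) ^ 2 ≤ 2 ^ m := by
    by_contra h
    push_neg at h
    have hlt := Finset.sum_lt_sum_of_nonempty (Finset.univ_nonempty)
      (fun v _ => h v)
    rw [hBsum, Finset.sum_const, Finset.card_univ, cardX, nsmul_eq_mul] at hlt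
    simp at hlt
  obtain ⟨v, hv⟩ := hex
  refine ⟨v, ?_⟩
  have h1 : (2 ^ m : ℝ) / 2 - hammingDist y (extSimplexWord m v) = (B v : ℝ) / 2 := by
    rw [hB]; push_cast; ring
  rw [h1, abs_div]
  have h2 : |(B v : ℝ)| ≤ Real.sqrt (2 ^ m) := by
    rw [← Real.sqrt_sq_eq_abs]
    apply Real.sqrt_le_sqrt
    have : ((B v : ℝ)) ^ 2 ≤ ((2 : ℝ) ^ m) := by exact_mod_cast hv
    exact this
  have : |(2 : ℝ)| = 2 := by norm_num
  rw [this]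
  linarith [h2]
end

section
/- Let C' be a linear [n, k', d'] code over F_2 with 2^{k'} * V(n, d'-1) <= 2^n, where V(n,t) = sum_{i=0}^{t} C(n,i). Let C'' be a random linear code spanned by k'' words chosen independently and uniformly from F_2^n, and let C = C' ⊕ C''. Then for every d <= d', Prob{ minimum distance of C < d } < 2^{k''} * V(n, d-1) / V(n, d'-1). -/
open Finset

/-- `V n t = ∑_{i=0}^{t} C(n,i)`, the volume of the Hamming ball of radius `t`. -/
def hammingVol (n t : ℕ) : ℕ := ∑ i ∈ Finset.range (t + 1), Nat.choose n i

lemma hammingVol_pos (n t : ℕ) : 0 < hammingVol n t := by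
  unfold hammingVol
  calc 0 < Nat.choose n 0 := by simp
    _ ≤ _ := Finset.single_le_sum (f := fun i => Nat.choose n i)
        (fun i _ => Nat.zero_le _) (by simp)

lemma add_self_eq_zero' {n : ℕ} (x : Fin n → ZMod 2) : x + x = 0 := by
  funext i
  show x i + x i = 0
  have : ∀ y : ZMod 2, y + y = 0 := by decide
  exact this _

lemma ball_card (n d : ℕ) (hd : 0 < d) :
    (Finset.univ.filter fun v : Fin n → ZMod 2 => hammingNorm v < d).card
      ≤ hammingVol n (d - 1) := by
  classical
  have hinj : Set.InjOn (fun v : Fin n → ZMod 2 => Finset.univ.filter fun i => v i ≠ 0)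
      ↑(Finset.univ.filter fun v : Fin n → ZMod 2 => hammingNorm v < d) := by
    intro v _ w _ h
    funext i
    have hi := Finset.ext_iff.mp h i
    simp only [Finset.mem_filter, Finset.mem_univ, true_and] at hi
    exact (by decide : ∀ x y : ZMod 2, ((x ≠ 0) ↔ (y ≠ 0)) → x = y) _ _ hi
  have hmaps : ∀ v ∈ Finset.univ.filter fun v : Fin n → ZMod 2 => hammingNorm v < d,
      (Finset.univ.filter fun i => v i ≠ 0) ∈
        Finset.univ.filter fun s : Finset (Fin n) => s.card < d := by
    intro v hv
    simp only [Finset.mem_filter, Finset.mem_univ, true_and] at hv ⊢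
    exact hv
  have hle := Finset.card_le_card_of_injOn _ hmaps hinj
  refine hle.trans (le_of_eq ?_)
  rw [Finset.card_eq_sum_card_fiberwise (f := Finset.card) (t := Finset.range d)
      (fun s hs => Finset.mem_range.mpr (Finset.mem_filter.mp hs).2)]
  have heq : ∀ i ∈ Finset.range d,
      ((Finset.univ.filter fun s : Finset (Fin n) => s.card < d).filter
        fun s => s.card = i).card = Nat.choose n i := by
    intro i hi
    have : ((Finset.univ.filter fun s : Finset (Fin n) => s.card < d).filter
        fun s => s.card = i) = Finset.powersetCard i Finset.univ := by
      rw [Finset.powersetCard_eq_filter, Finset.powerset_univ]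
      ext s
      simp only [Finset.mem_filter, Finset.mem_univ, true_and]
      constructor
      · rintro ⟨_, h2⟩; exact h2
      · intro h; exact ⟨h ▸ Finset.mem_range.mp hi, h⟩
    rw [this, Finset.card_powersetCard, Finset.card_univ, Fintype.card_fin]
  rw [Finset.sum_congr rfl heq]
  unfold hammingVol
  rw [Nat.sub_add_cancel hd]

lemma pair_card (n k'' d : ℕ) (c' : Fin n → ZMod 2) (a : Fin k'' → ZMod 2) (ha : a ≠ 0) :
    (Finset.univ.filter fun t : Fin k'' → Fin n → ZMod 2 =>
        hammingNorm (c' + ∑ i, a i • t i) < d).card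
      = (Finset.univ.filter fun v : Fin n → ZMod 2 => hammingNorm v < d).card
          * 2 ^ (n * (k'' - 1)) := by
  classical
  obtain ⟨j, hj⟩ : ∃ j, a j ≠ 0 := by
    by_contra h
    push_neg at h
    exact ha (funext fun i => h i)
  have haj : a j = 1 := by
    have : ∀ y : ZMod 2, y ≠ 0 → y = 1 := by decide
    exact this _ hj
  set ψ : (Fin k'' → Fin n → ZMod 2) → Fin k'' → Fin n → ZMod 2 :=
    fun t => Function.update t j (c' + ∑ i, a i • t i) with hψ
  have hsum : ∀ t : Fin k'' → Fin n → ZMod 2,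
      ∑ i, a i • ψ t i = (c' + ∑ i, a i • t i) + ∑ i ∈ Finset.univ \ {j}, a i • t i := by
    intro t
    have h1 : (fun i => a i • ψ t i)
        = Function.update (fun i => a i • t i) j (c' + ∑ i, a i • t i) := by
      funext i
      by_cases h : i = j
      · subst h; simp [hψ, Function.update_self, haj]
      · simp [hψ, Function.update_of_ne h]
    calc ∑ i, a i • ψ t i
        = ∑ i, Function.update (fun i => a i • t i) j (c' + ∑ i, a i • t i) i := by
          rw [h1]
      _ = (c' + ∑ i, a i • t i) + ∑ i ∈ Finset.univ \ {j}, a i • t i :=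
          Finset.sum_update_of_mem (Finset.mem_univ j) _ _
  have key : ∀ t : Fin k'' → Fin n → ZMod 2, c' + ∑ i, a i • ψ t i = t j := by
    intro t
    have hs : ∑ i, a i • t i = t j + ∑ i ∈ Finset.univ \ {j}, a i • t i := by
      rw [Finset.sum_eq_sum_sdiff_singleton_add (Finset.mem_univ j) (fun i => a i • t i),
        haj, one_smul, add_comm]
    rw [hsum t, hs]
    set R := ∑ i ∈ Finset.univ \ {j}, a i • t i
    calc c' + (c' + (t j + R) + R) = (c' + c') + ((R + R) + t j) := by abel
      _ = t j := by rw [add_self_eq_zero', add_self_eq_zero', zero_add, zero_add]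
  have hψj : ∀ t, ψ t j = c' + ∑ i, a i • t i := fun t => Function.update_self _ _ _
  have hinv : ∀ t, ψ (ψ t) = t := by
    intro t
    show Function.update (ψ t) j (c' + ∑ i, a i • ψ t i) = t
    rw [key t, hψ]
    simp only [Function.update_idem, Function.update_eq_self]
  have hcard : (Finset.univ.filter fun t : Fin k'' → Fin n → ZMod 2 =>
        hammingNorm (c' + ∑ i, a i • t i) < d).card
      = (Finset.univ.filter fun t : Fin k'' → Fin n → ZMod 2 =>
        hammingNorm (t j) < d).card := by
    apply Finset.card_bij' (fun t _ => ψ t) (fun t _ => ψ t)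
    · intro t ht
      simp only [Finset.mem_filter, Finset.mem_univ, true_and] at ht ⊢
      rw [hψj t]
      exact ht
    · intro t ht
      simp only [Finset.mem_filter, Finset.mem_univ, true_and] at ht ⊢
      rw [key t]
      exact ht
    · intro t _; exact hinv t
    · intro t _; exact hinv t
  rw [hcard]
  -- now count {t | hammingNorm (t j) < d}
  have : (Finset.univ.filter fun t : Fin k'' → Fin n → ZMod 2 =>
        hammingNorm (t j) < d).card
      = Fintype.card {t : Fin k'' → Fin n → ZMod 2 // hammingNorm (t j) < d} :=
    (Fintype.card_subtype _).symm
  rw [this]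
  have e1 : {t : Fin k'' → Fin n → ZMod 2 // hammingNorm (t j) < d}
      ≃ {p : (Fin n → ZMod 2) × ({i : Fin k'' // i ≠ j} → Fin n → ZMod 2) //
          hammingNorm p.1 < d} :=
    (Equiv.funSplitAt j (Fin n → ZMod 2)).subtypeEquiv (fun t => Iff.rfl)
  have e2 : {p : (Fin n → ZMod 2) × ({i : Fin k'' // i ≠ j} → Fin n → ZMod 2) //
          hammingNorm p.1 < d}
      ≃ {v : Fin n → ZMod 2 // hammingNorm v < d}
          × ({i : Fin k'' // i ≠ j} → Fin n → ZMod 2) :=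
    Equiv.prodSubtypeFstEquivSubtypeProd (p := fun v : Fin n → ZMod 2 => hammingNorm v < d)
  rw [Fintype.card_congr (e1.trans e2), Fintype.card_prod, Fintype.card_subtype]
  congr 1
  have h3 : Fintype.card {i : Fin k'' // i ≠ j} = k'' - 1 := by
    simpa using Set.card_ne_eq j
  rw [Fintype.card_fun, h3]
  have h2 : Fintype.card (Fin n → ZMod 2) = 2 ^ n := by
    rw [Fintype.card_fun]; simp
  rw [h2, ← pow_mul]

lemma final_nat (n k' k'' dv dv' B N : ℕ) (hdv : 0 < dv)
    (hB : B ≤ dv) (hgv : 2 ^ k' * dv' ≤ 2 ^ n)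
    (hN : N ≤ 2 ^ k' * (2 ^ k'' - 1) * (B * 2 ^ (n * (k'' - 1)))) :
    N * dv' < 2 ^ k'' * dv * 2 ^ (n * k'') := by
  cases k'' with
  | zero =>
    simp only [pow_zero, Nat.sub_self, Nat.mul_zero, Nat.zero_mul, Nat.le_zero] at hN
    rw [hN]
    simpa using hdv
  | succ m =>
    have hX : 0 < dv * 2 ^ (n * m) := Nat.mul_pos hdv (pow_pos (by norm_num) _)
    have e1 : (2:ℕ) ^ n * 2 ^ (n * m) = 2 ^ (n * (m + 1)) := by
      rw [← pow_add]; congr 1; ring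
    calc N * dv'
        ≤ 2 ^ k' * (2 ^ (m+1) - 1) * (dv * 2 ^ (n * m)) * dv' := by
          have : N ≤ 2 ^ k' * (2 ^ (m+1) - 1) * (dv * 2 ^ (n * m)) := by
            simp only [Nat.add_sub_cancel] at hN
            refine hN.trans ?_
            gcongr
          exact Nat.mul_le_mul_right _ this
      _ = (2 ^ k' * dv') * ((2 ^ (m+1) - 1) * (dv * 2 ^ (n * m))) := by ring
      _ ≤ 2 ^ n * ((2 ^ (m+1) - 1) * (dv * 2 ^ (n * m))) :=
          Nat.mul_le_mul_right _ hgv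
      _ < 2 ^ n * (2 ^ (m+1) * (dv * 2 ^ (n * m))) := by
          have h1 : (2:ℕ) ^ (m+1) - 1 < 2 ^ (m+1) :=
            Nat.sub_lt (pow_pos (by norm_num) _) Nat.one_pos
          have := Nat.mul_lt_mul_of_lt_of_le h1 (le_refl (dv * 2 ^ (n * m))) hX
          exact Nat.mul_lt_mul_of_le_of_lt (le_refl _) this (pow_pos (by norm_num) _)
      _ = 2 ^ (m+1) * dv * 2 ^ (n * (m + 1)) := by rw [← e1]; ring

theorem stmt18 (n k' d' d k'' : ℕ) (hn : 0 < n) (hd : 0 < d) (hdd' : d ≤ d')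
    (C' : Submodule (ZMod 2) (Fin n → ZMod 2))
    (hk' : Module.finrank (ZMod 2) C' = k')
    (hmin : ∀ c ∈ C', c ≠ 0 → d' ≤ hammingNorm c)
    (hgv : 2 ^ k' * hammingVol n (d' - 1) ≤ 2 ^ n) :
    (Nat.card {t : Fin k'' → Fin n → ZMod 2 |
          ∃ c ∈ C' ⊔ Submodule.span (ZMod 2) (Set.range t),
            c ≠ 0 ∧ hammingNorm c < d} : ℝ) / 2 ^ (n * k'')
      < 2 ^ k'' * (hammingVol n (d - 1) : ℝ) / hammingVol n (d' - 1) := by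
  classical
  set S : Set (Fin k'' → Fin n → ZMod 2) := {t : Fin k'' → Fin n → ZMod 2 |
          ∃ c ∈ C' ⊔ Submodule.span (ZMod 2) (Set.range t),
            c ≠ 0 ∧ hammingNorm c < d} with hS
  set B := (Finset.univ.filter fun v : Fin n → ZMod 2 => hammingNorm v < d).card with hB
  set P : Finset ((Fin n → ZMod 2) × (Fin k'' → ZMod 2)) :=
    (C' : Set (Fin n → ZMod 2)).toFinset ×ˢ (Finset.univ.erase 0) with hP
  set E : (Fin n → ZMod 2) × (Fin k'' → ZMod 2) → Finset (Fin k'' → Fin n → ZMod 2) :=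
    fun p => Finset.univ.filter
      (fun t => hammingNorm (p.1 + ∑ i, p.2 i • t i) < d) with hE
  have hsub : S.toFinset ⊆ P.biUnion E := by
    intro t ht
    rw [Set.mem_toFinset] at ht
    obtain ⟨c, hc, hc0, hcd⟩ := ht
    obtain ⟨y, hy, z, hz, rfl⟩ := Submodule.mem_sup.mp hc
    obtain ⟨a, rfl⟩ := (Submodule.mem_span_range_iff_exists_fun (ZMod 2)).mp hz
    have ha : a ≠ 0 := by
      rintro rfl
      simp only [Pi.zero_apply, zero_smul, Finset.sum_const_zero, add_zero] at hc0 hcd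
      exact absurd (hmin y hy hc0) (by omega)
    refine Finset.mem_biUnion.mpr ⟨(y, a), ?_, ?_⟩
    · rw [hP, Finset.mem_product]
      exact ⟨Set.mem_toFinset.mpr hy, Finset.mem_erase.mpr ⟨ha, Finset.mem_univ _⟩⟩
    · simp only [hE, Finset.mem_filter, Finset.mem_univ, true_and]
      exact hcd
  have hcardC : (C' : Set (Fin n → ZMod 2)).toFinset.card = 2 ^ k' := by
    rw [Set.toFinset_card]
    have : Fintype.card (C' : Set (Fin n → ZMod 2)) = Fintype.card C' := rfl
    rw [this, Module.card_eq_pow_finrank (K := ZMod 2) (V := C'), ZMod.card, hk']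
  have hcarda : (Finset.univ.erase (0 : Fin k'' → ZMod 2)).card = 2 ^ k'' - 1 := by
    rw [Finset.card_erase_of_mem (Finset.mem_univ _), Finset.card_univ, Fintype.card_fun,
      ZMod.card, Fintype.card_fin]
  have hN : S.toFinset.card ≤ 2 ^ k' * (2 ^ k'' - 1) * (B * 2 ^ (n * (k'' - 1))) := by
    calc S.toFinset.card ≤ (P.biUnion E).card := Finset.card_le_card hsub
      _ ≤ ∑ p ∈ P, (E p).card := Finset.card_biUnion_le
      _ ≤ P.card * (B * 2 ^ (n * (k'' - 1))) := by
          refine Finset.sum_le_card_nsmul _ _ _ ?_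
          intro p hp
          rw [hP, Finset.mem_product] at hp
          have ha : p.2 ≠ 0 := (Finset.mem_erase.mp hp.2).1
          rw [hE]
          exact le_of_eq (pair_card n k'' d p.1 p.2 ha)
      _ = 2 ^ k' * (2 ^ k'' - 1) * (B * 2 ^ (n * (k'' - 1))) := by
          rw [hP, Finset.card_product, hcardC, hcarda]
  have hScard : (Nat.card S : ℝ) = (S.toFinset.card : ℝ) := by
    rw [Nat.card_coe_set_eq, Set.ncard_eq_toFinset_card']
  rw [hScard]
  have hdv := hammingVol_pos n (d - 1)
  have hdv' := hammingVol_pos n (d' - 1)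
  rw [div_lt_div_iff₀ (by positivity) (by exact_mod_cast hdv')]
  have := final_nat n k' k'' (hammingVol n (d - 1)) (hammingVol n (d' - 1)) B
    S.toFinset.card hdv (ball_card n d hd) hgv hN
  push_cast
  exact_mod_cast this
end

section
/- For every code C ⊆ F_2^n there exists a word x in F_2^n such that the shifted set C + x contains at least C(n, n/2) * |C| / 2^n >= |C| / sqrt(2n) balanced words (words of Hamming weight n/2). -/
open Finset

lemma aux16 (m : ℕ) (hm : 1 ≤ m) : 16 ^ m ≤ 4 * m * (Nat.centralBinom m) ^ 2 := by
  induction m with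
  | zero => omega
  | succ m ih =>
    rcases Nat.eq_zero_or_pos m with h0 | h1
    · subst h0; decide
    · have h := ih h1
      have key : (m + 1) * Nat.centralBinom (m + 1)
          = 2 * (2 * m + 1) * Nat.centralBinom m := Nat.succ_mul_centralBinom_succ m
      have hpos : 0 < m + 1 := Nat.succ_pos m
      have inner : 64 * (m * (m + 1)) ≤ 16 * (2 * m + 1) ^ 2 := by nlinarith
      have : (m + 1) * 16 ^ (m + 1) ≤ (m + 1) * (4 * (m + 1) * Nat.centralBinom (m + 1) ^ 2) := by
        calc (m + 1) * 16 ^ (m + 1) = 16 * ((m + 1) * 16 ^ m) := by ring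
          _ ≤ 16 * ((m + 1) * (4 * m * Nat.centralBinom m ^ 2)) := by
              exact Nat.mul_le_mul_left _ (Nat.mul_le_mul_left _ h)
          _ = 64 * (m * (m + 1)) * Nat.centralBinom m ^ 2 := by ring
          _ ≤ 16 * (2 * m + 1) ^ 2 * Nat.centralBinom m ^ 2 := by
              exact Nat.mul_le_mul_right _ inner
          _ = 4 * (2 * (2 * m + 1) * Nat.centralBinom m) ^ 2 := by ring
          _ = 4 * ((m + 1) * Nat.centralBinom (m + 1)) ^ 2 := by rw [key]
          _ = (m + 1) * (4 * (m + 1) * Nat.centralBinom (m + 1) ^ 2) := by ring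
      exact Nat.le_of_mul_le_mul_left this hpos

lemma card_weight (n k : ℕ) :
    (univ.filter fun y : Fin n → ZMod 2 => hammingNorm y = k).card = n.choose k := by
  have one_ne : (1 : ZMod 2) ≠ 0 := by decide
  rw [show n.choose k = #(Finset.powersetCard k (univ : Finset (Fin n))) from by
    rw [Finset.card_powersetCard, Finset.card_univ, Fintype.card_fin]]
  refine Finset.card_bij' (fun y _ => univ.filter fun i => y i ≠ 0)
    (fun s _ => fun i => if i ∈ s then (1 : ZMod 2) else 0) ?_ ?_ ?_ ?_
  · intro y hy
    simp only [mem_filter, mem_univ, true_and] at hy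
    rw [Finset.mem_powersetCard]
    exact ⟨Finset.subset_univ _, hy⟩
  · intro s hs
    rw [Finset.mem_powersetCard] at hs
    simp only [mem_filter, mem_univ, true_and]
    rw [hammingNorm, ← hs.2]
    congr 1
    ext i
    by_cases h : i ∈ s <;> simp [h, one_ne]
  · intro y hy
    funext i
    have : y i = 0 ∨ y i = 1 := by generalize y i = a; revert a; decide
    rcases this with h | h <;> simp [Finset.mem_filter, h, one_ne]
  · intro s hs
    ext i
    simp only [mem_filter, mem_univ, true_and]
    by_cases h : i ∈ s <;> simp [h, one_ne]

theorem stmt19 (n : ℕ) (hn : 0 < n) (he : Even n) (C : Set (Fin n → ZMod 2)) :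
    ∃ x : Fin n → ZMod 2,
      (Nat.choose n (n / 2) : ℝ) * Nat.card C / 2 ^ n
          ≤ (Nat.card {y : Fin n → ZMod 2 | y - x ∈ C ∧ hammingNorm y = n / 2} : ℝ) ∧
      (Nat.card C : ℝ) / Real.sqrt (2 * n)
          ≤ (Nat.choose n (n / 2) : ℝ) * Nat.card C / 2 ^ n := by
  classical
  obtain ⟨m, hm⟩ := he
  have hn2 : n = 2 * m := by omega
  have hk : n / 2 = m := by omega
  have hm1 : 1 ≤ m := by omega
  set k := n / 2 with hkdef
  -- counting function
  set f : (Fin n → ZMod 2) → ℕ := fun x =>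
    (univ.filter fun y => y - x ∈ C ∧ hammingNorm y = k).card with hf
  have hcard : ∀ x : Fin n → ZMod 2,
      Nat.card {y : Fin n → ZMod 2 | y - x ∈ C ∧ hammingNorm y = k} = f x := by
    intro x
    rw [Nat.card_eq_fintype_card]
    convert Fintype.card_subtype (p := fun y : Fin n → ZMod 2 => y - x ∈ C ∧ hammingNorm y = k)
    simp
  have hC : Nat.card C = C.toFinset.card := by
    rw [Nat.card_eq_fintype_card, Set.toFinset_card]
  -- for each balanced y, number of x with y - x ∈ C is |C|
  have hrow : ∀ y : Fin n → ZMod 2,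
      (univ.filter fun x => y - x ∈ C).card = Nat.card C := by
    intro y
    rw [hC]
    apply Finset.card_bij' (fun x _ => y - x) (fun c _ => y - c)
    · intro x hx
      simp only [mem_filter, mem_univ, true_and] at hx
      rwa [Set.mem_toFinset]
    · intro c hc
      simp only [mem_filter, mem_univ, true_and]
      rw [Set.mem_toFinset] at hc
      simpa using hc
    · intro x _; abel
    · intro c _; abel
  have hsum : ∑ x : Fin n → ZMod 2, f x = n.choose k * Nat.card C := by
    simp only [hf]
    have : ∀ x : Fin n → ZMod 2, (univ.filter fun y => y - x ∈ C ∧ hammingNorm y = k).card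
        = ∑ y : Fin n → ZMod 2, if y - x ∈ C ∧ hammingNorm y = k then 1 else 0 := by
      intro x; rw [Finset.card_filter]
    simp_rw [this]
    rw [Finset.sum_comm]
    have : ∀ y : Fin n → ZMod 2,
        (∑ x : Fin n → ZMod 2, if y - x ∈ C ∧ hammingNorm y = k then 1 else 0)
        = if hammingNorm y = k then Nat.card C else 0 := by
      intro y
      by_cases hb : hammingNorm y = k
      · simp only [hb, and_true, if_true]
        rw [← hrow y, Finset.card_filter]
      · simp [hb]
    simp_rw [this]
    rw [← Finset.sum_filter, Finset.sum_const, card_weight, smul_eq_mul]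
  -- pigeonhole over reals
  have hcard2 : (Finset.univ : Finset (Fin n → ZMod 2)).card = 2 ^ n := by
    simp [Finset.card_univ]
  have hpow : (0:ℝ) < 2 ^ n := by positivity
  obtain ⟨x, -, hx⟩ := Finset.exists_le_of_sum_le (s := (univ : Finset (Fin n → ZMod 2)))
      (f := fun _ => (n.choose k : ℝ) * Nat.card C / 2 ^ n) (g := fun x => (f x : ℝ))
      Finset.univ_nonempty (by
        rw [Finset.sum_const, hcard2, nsmul_eq_mul]
        have : ∑ x : Fin n → ZMod 2, (f x : ℝ) = (n.choose k : ℝ) * Nat.card C := by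
          rw [← Nat.cast_sum, hsum]; push_cast; ring
        rw [this]
        field_simp
        push_cast; linarith)
  refine ⟨x, ?_, ?_⟩
  · rw [hcard]; exact hx
  · -- choose bound via aux16
    have hcb : n.choose k = Nat.centralBinom m := by
      rw [Nat.centralBinom, hk, hn2]
    have h16 := aux16 m hm1
    have hs : (0:ℝ) < Real.sqrt (2 * n) := by
      apply Real.sqrt_pos.2; positivity
    have key : (2:ℝ) ^ n ≤ (n.choose k : ℝ) * Real.sqrt (2 * n) := by
      have h2 : ((2:ℝ) ^ n) ^ 2 ≤ ((n.choose k : ℝ) * Real.sqrt (2 * n)) ^ 2 := by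
        rw [mul_pow, Real.sq_sqrt (by positivity)]
        have h4 : n * 2 = 4 * m := by omega
        have : ((2:ℝ) ^ n) ^ 2 = 16 ^ m := by
          rw [← pow_mul, h4, pow_mul]; norm_num
        rw [this, hcb]
        calc (16:ℝ) ^ m ≤ 4 * m * (Nat.centralBinom m : ℝ) ^ 2 := by
              exact_mod_cast h16
          _ = (Nat.centralBinom m : ℝ) ^ 2 * (2 * n) := by rw [hn2]; push_cast; ring
      have := (pow_le_pow_iff_left₀ (by positivity) (by positivity) (two_ne_zero)).1 h2
      exact this
    rw [div_le_div_iff₀ hs hpow]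
    calc (Nat.card C : ℝ) * 2 ^ n ≤ (Nat.card C : ℝ) * ((n.choose k : ℝ) * Real.sqrt (2 * n)) := by
          apply mul_le_mul_of_nonneg_left key (by positivity)
      _ = (n.choose k : ℝ) * Nat.card C * Real.sqrt (2 * n) := by ring
end
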